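/- For t ∈ (0, 1/2), the pair X(t,z) = −1 + 2zt, Y(t,z) = 1 + t(2z−2), z ∈ [0,1], satisfies pointwise the pseudo-inverse system: ∂_t X(t,z) = ∫₀¹ sign(X(t,z)−X(t,ξ))dξ − ∫₀¹ sign(X(t,z)−Y(t,ξ))dξ and ∂_t Y(t,z) = ∫₀¹ sign(Y(t,z)−Y(t,ξ))dξ − ∫₀¹ sign(Y(t,z)−X(t,ξ))dξ, with the convention sign(0)=0. -/

import Mathlib

open MeasureTheory Set

lemma sign_pos_mul (c x : ℝ) (hc : 0 < c) : Real.sign (c * x) = Real.sign x := by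
  rcases lt_trichotomy x 0 with h | h | h
  · rw [Real.sign_of_neg h, Real.sign_of_neg (mul_neg_of_pos_of_neg hc h)]
  · simp [h]
  · rw [Real.sign_of_pos h, Real.sign_of_pos (mul_pos hc h)]

lemma integral_sign_sub (z : ℝ) (hz0 : 0 ≤ z) (hz1 : z ≤ 1) :
    ∫ ξ in Ioo (0:ℝ) 1, Real.sign (z - ξ) = 2 * z - 1 := by
  haveI : IsFiniteMeasure (volume.restrict (Ioo (0:ℝ) 1)) := by
    constructor
    rw [Measure.restrict_apply_univ]
    simp [Real.volume_Ioo]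
  have hfun : ∀ ξ : ℝ, Real.sign (z - ξ) =
      (Iio z).indicator (fun _ => (1:ℝ)) ξ - (Ioi z).indicator (fun _ => (1:ℝ)) ξ := by
    intro ξ
    rcases lt_trichotomy ξ z with h | h | h
    · rw [Real.sign_of_pos (by linarith)]
      simp [indicator, h, not_lt.2 h.le]
    · subst h; simp
    · rw [Real.sign_of_neg (by linarith)]
      simp [indicator, not_lt.2 h.le, h]
  have int1 : Integrable ((Iio z).indicator (fun _ => (1:ℝ)))
      (volume.restrict (Ioo (0:ℝ) 1)) :=
    (integrable_const (1:ℝ)).indicator measurableSet_Iio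
  have int2 : Integrable ((Ioi z).indicator (fun _ => (1:ℝ)))
      (volume.restrict (Ioo (0:ℝ) 1)) :=
    (integrable_const (1:ℝ)).indicator measurableSet_Ioi
  simp_rw [hfun]
  rw [integral_sub int1 int2, setIntegral_indicator measurableSet_Iio,
    setIntegral_indicator measurableSet_Ioi]
  have h1 : Ioo (0:ℝ) 1 ∩ Iio z = Ioo 0 z := by
    ext x
    simp only [mem_inter_iff, mem_Ioo, mem_Iio]
    constructor
    · rintro ⟨⟨hx1, _⟩, hx3⟩; exact ⟨hx1, hx3⟩
    · rintro ⟨hx1, hx3⟩; exact ⟨⟨hx1, lt_of_lt_of_le hx3 hz1⟩, hx3⟩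
  have h2 : Ioo (0:ℝ) 1 ∩ Ioi z = Ioo z 1 := by
    ext x
    simp only [mem_inter_iff, mem_Ioo, mem_Ioi]
    constructor
    · rintro ⟨⟨_, hx2⟩, hx3⟩; exact ⟨hx3, hx2⟩
    · rintro ⟨hx1, hx3⟩; exact ⟨⟨lt_of_le_of_lt hz0 hx1, hx3⟩, hx1⟩
  rw [h1, h2, setIntegral_const, setIntegral_const]
  rw [Real.volume_real_Ioo_of_le (by linarith), Real.volume_real_Ioo_of_le (by linarith)]
  simp only [smul_eq_mul]
  ring

theorem two_deltas_gradient_flow_solution :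
    ∀ t ∈ Ioo (0 : ℝ) (1 / 2), ∀ z ∈ Icc (0 : ℝ) 1,
      HasDerivAt (fun τ : ℝ => -1 + 2 * z * τ)
        ((∫ ξ in Ioo (0 : ℝ) 1, Real.sign ((-1 + 2 * z * t) - (-1 + 2 * ξ * t))) -
          ∫ ξ in Ioo (0 : ℝ) 1, Real.sign ((-1 + 2 * z * t) - (1 + t * (2 * ξ - 2)))) t ∧
      HasDerivAt (fun τ : ℝ => 1 + τ * (2 * z - 2))
        ((∫ ξ in Ioo (0 : ℝ) 1, Real.sign ((1 + t * (2 * z - 2)) - (1 + t * (2 * ξ - 2)))) -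
          ∫ ξ in Ioo (0 : ℝ) 1, Real.sign ((1 + t * (2 * z - 2)) - (-1 + 2 * ξ * t))) t := by
  rintro t ⟨ht0, ht2⟩ z ⟨hz0, hz1⟩
  have hvol : (volume (Ioo (0:ℝ) 1)).toReal = 1 := by
    simp [Real.volume_Ioo]
  -- first integral for X
  have hA : (∫ ξ in Ioo (0 : ℝ) 1, Real.sign ((-1 + 2 * z * t) - (-1 + 2 * ξ * t)))
      = 2 * z - 1 := by
    rw [show (fun ξ : ℝ => Real.sign ((-1 + 2 * z * t) - (-1 + 2 * ξ * t)))
        = fun ξ : ℝ => Real.sign ((2 * t) * (z - ξ)) from funext fun ξ => by ring_nf]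
    simp_rw [sign_pos_mul (2 * t) _ (by linarith)]
    exact integral_sign_sub z hz0 hz1
  -- second integral for X : integrand is -1
  have hB : (∫ ξ in Ioo (0 : ℝ) 1, Real.sign ((-1 + 2 * z * t) - (1 + t * (2 * ξ - 2))))
      = -1 := by
    rw [setIntegral_congr_fun measurableSet_Ioo
      (fun ξ hξ => by
        rcases hξ with ⟨hξ0, hξ1⟩
        show Real.sign _ = (-1 : ℝ)
        rw [Real.sign_of_neg (by nlinarith)])]
    rw [setIntegral_const, measureReal_def, hvol]; simp
  -- first integral for Y
  have hC : (∫ ξ in Ioo (0 : ℝ) 1, Real.sign ((1 + t * (2 * z - 2)) - (1 + t * (2 * ξ - 2))))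
      = 2 * z - 1 := by
    rw [show (fun ξ : ℝ => Real.sign ((1 + t * (2 * z - 2)) - (1 + t * (2 * ξ - 2))))
        = fun ξ : ℝ => Real.sign ((2 * t) * (z - ξ)) from funext fun ξ => by ring_nf]
    simp_rw [sign_pos_mul (2 * t) _ (by linarith)]
    exact integral_sign_sub z hz0 hz1
  -- second integral for Y : integrand is 1
  have hD : (∫ ξ in Ioo (0 : ℝ) 1, Real.sign ((1 + t * (2 * z - 2)) - (-1 + 2 * ξ * t)))
      = 1 := by
    rw [setIntegral_congr_fun measurableSet_Ioo
      (fun ξ hξ => by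
        rcases hξ with ⟨hξ0, hξ1⟩
        show Real.sign _ = (1 : ℝ)
        rw [Real.sign_of_pos (by nlinarith)])]
    rw [setIntegral_const, measureReal_def, hvol]; simp
  constructor
  · rw [hA, hB]
    have h := ((hasDerivAt_id t).const_mul (2 * z)).const_add (-1 : ℝ)
    rw [show (2 * z - 1 - -1 : ℝ) = 2 * z * 1 by ring]
    exact h
  · rw [hC, hD]
    have h := ((hasDerivAt_mul_const (2 * z - 2)) : HasDerivAt (fun x : ℝ => x * (2 * z - 2)) (2 * z - 2) t).const_add (1 : ℝ)
    rw [show (2 * z - 1 - 1 : ℝ) = 2 * z - 2 by ring]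
    exact h
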